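/- Let n ≥ 1 and let x = ((u_1,v_1,b_1),…,(u_n,v_n,b_n)) and x' be two elements of ([0,1]² × {−1,1})^n that differ in at most one coordinate, such that in each of x and x' the first components u_1,…,u_n are pairwise distinct and the second components v_1,…,v_n are pairwise distinct. Let f denote the map assigning to such a configuration the number f(x) = des(π̃(x)) + des(π̃(x)^{-1}), where π̃(x) ∈ B_n is the signed permutation associated to x. Then |f(x) − f(x')| ≤ 4. -/

import Mathlib

open MeasureTheory ProbabilityTheory Filter Finset Topology

noncomputable section

/-- The index set `{-n, …, -1, 1, …, n}` on which signed permutations of rank `n` act. -/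
abbrev SIdx (n : ℕ) := {i : ℤ // i ≠ 0 ∧ |i| ≤ (n : ℤ)}

instance SIdx.fintype (n : ℕ) : Fintype (SIdx n) :=
  Fintype.ofFinset ((Finset.Icc (-(n : ℤ)) (n : ℤ)).filter fun i => i ≠ 0)
    (by intro i; show _ ↔ i ≠ 0 ∧ |i| ≤ (n : ℤ); simp only [Finset.mem_filter, Finset.mem_Icc, abs_le]; omega)

instance (n : ℕ) : Neg (SIdx n) :=
  ⟨fun i => ⟨-i.1, by
    obtain ⟨h1, h2⟩ := i.2; exact ⟨neg_ne_zero.mpr h1, by simpa [abs_neg] using h2⟩⟩⟩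

@[simp] lemma SIdx.neg_val {n : ℕ} (i : SIdx n) : (-i).1 = -i.1 := rfl

/-- A permutation of `{-n, …, -1, 1, …, n}` is a signed permutation iff it is antisymmetric,
i.e. `π(-i) = -π(i)` for all `i`. -/
def IsSignedPerm (n : ℕ) (π : Equiv.Perm (SIdx n)) : Prop := ∀ i, π (-i) = -(π i)

instance (n : ℕ) : DecidablePred (IsSignedPerm n) :=
  fun π => inferInstanceAs (Decidable (∀ i, π (-i) = -(π i)))

/-- The hyperoctahedral group `B_n`, i.e. the group of signed permutations of rank `n`. -/
abbrev BGroup (n : ℕ) := {π : Equiv.Perm (SIdx n) // IsSignedPerm n π}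

instance (n : ℕ) : Nonempty (BGroup n) := ⟨⟨1, fun _ => rfl⟩⟩

/-- The value `π(j)` of a signed permutation in one-line notation (set to `0` outside the
domain; in particular `valAt n π 0 = 0`, matching the type-`B` convention `π(0) = 0`). -/
def valAt (n : ℕ) (π : Equiv.Perm (SIdx n)) (j : ℤ) : ℤ :=
  if h : j ≠ 0 ∧ |j| ≤ (n : ℤ) then (π ⟨j, h⟩).1 else 0

/-- The descent number of a signed permutation (type-`B` convention `π(0) = 0`):
`des(π) = #{0 ≤ i ≤ n-1 : π(i) > π(i+1)}`. -/
def desB (n : ℕ) (π : Equiv.Perm (SIdx n)) : ℕ :=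
  ((Finset.range n).filter fun i : ℕ => valAt n π ((i : ℤ) + 1) < valAt n π ((i : ℤ))).card

/-- Expectation of a statistic with respect to the uniform distribution on a finite set. -/
def expec {α : Type*} [Fintype α] (f : α → ℝ) : ℝ := (∑ x, f x) / (Fintype.card α)

/-- Variance of a statistic with respect to the uniform distribution on a finite set. -/
def varU {α : Type*} [Fintype α] (f : α → ℝ) : ℝ := expec fun x => (f x - expec f) ^ 2

/-- The law of a real-valued statistic under the uniform distribution, as a probability
measure on `ℝ`. -/
def unifLaw {α : Type*} [Fintype α] [Nonempty α] (f : α → ℝ) : ProbabilityMeasure ℝ :=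
  ⟨((PMF.uniformOfFintype α).map f).toMeasure, inferInstance⟩

/-- The standard normal distribution `N(0,1)` as a probability measure on `ℝ`. -/
def stdGaussianPM : ProbabilityMeasure ℝ := ⟨gaussianReal 0 1, inferInstance⟩

/-- The x-rank of the `i`-th point of a configuration: the position of `uᵢ` when the first
coordinates are sorted in ascending order. -/
def xrank {n : ℕ} (x : Fin n → ℝ × ℝ × Bool) (i : Fin n) : ℕ :=
  (Finset.univ.filter fun j : Fin n => (x j).1 ≤ (x i).1).card

/-- The y-rank of the `i`-th point of a configuration: the position of `vᵢ` when the second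
coordinates are sorted in ascending order. -/
def yrank {n : ℕ} (x : Fin n → ℝ × ℝ × Bool) (i : Fin n) : ℕ :=
  (Finset.univ.filter fun j : Fin n => (x j).2.1 ≤ (x i).2.1).card

/-- The sign of the `i`-th point (`true` codes `+1`). -/
def bsgn {n : ℕ} (x : Fin n → ℝ × ℝ × Bool) (i : Fin n) : ℤ :=
  if (x i).2.2 then 1 else -1

/-- The configuration lies in `([0,1]² × {±1})ⁿ`. -/
def InRange {n : ℕ} (x : Fin n → ℝ × ℝ × Bool) : Prop :=
  ∀ i, (x i).1 ∈ Set.Icc (0 : ℝ) 1 ∧ (x i).2.1 ∈ Set.Icc (0 : ℝ) 1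

/-- The first coordinates of the configuration are pairwise distinct, and so are the
second coordinates. -/
def DistinctCoords {n : ℕ} (x : Fin n → ℝ × ℝ × Bool) : Prop :=
  (∀ i j, i ≠ j → (x i).1 ≠ (x j).1) ∧ ∀ i j, i ≠ j → (x i).2.1 ≠ (x j).2.1

/-- `P` is the signed permutation associated to the configuration `x`: it is antisymmetric,
and for every point the value of `P` at the point's x-rank is its sign times its y-rank. -/
def AssocSigned {n : ℕ} (x : Fin n → ℝ × ℝ × Bool) (P : Equiv.Perm (SIdx n)) : Prop :=
  IsSignedPerm n P ∧ ∀ i : Fin n, valAt n P (xrank x i) = bsgn x i * (yrank x i)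

/-- The statistic `f = des(π̃) + des(π̃⁻¹)`. -/
def fstat (n : ℕ) (P : Equiv.Perm (SIdx n)) : ℤ := (desB n P : ℤ) + (desB n P⁻¹ : ℤ)

/- ===== auxiliary development for stmt13 ===== -/

section Aux

open Finset

/-- descent count of an integer sequence on `{0,…,m}`. -/
def desSeq (m : ℕ) (a : ℕ → ℤ) : ℕ :=
  ((Finset.range m).filter fun i => a (i + 1) < a i).card

/-- delete the entry at position `p`. -/
def del (p : ℕ) (a : ℕ → ℤ) : ℕ → ℤ := fun i => if i < p then a i else a (i + 1)

lemma rank_lt {α : Type*} [DecidableEq α] (s : Finset α) (f : α → ℝ) {i j : α}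
    (hj : j ∈ s) (hij : f i < f j) :
    (s.filter fun k => f k ≤ f i).card < (s.filter fun k => f k ≤ f j).card := by
  apply Finset.card_lt_card
  rw [Finset.ssubset_def]
  constructor
  · intro k hk
    rw [Finset.mem_filter] at hk ⊢
    exact ⟨hk.1, hk.2.trans hij.le⟩
  · intro hcon
    have := hcon (Finset.mem_filter.2 ⟨hj, le_rfl⟩)
    rw [Finset.mem_filter] at this
    exact absurd this.2 (not_le.2 hij)

lemma rank_lt_iff {α : Type*} [DecidableEq α] (s : Finset α) (f : α → ℝ) {i j : α}
    (hj : j ∈ s) :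
    ((s.filter fun k => f k ≤ f i).card < (s.filter fun k => f k ≤ f j).card) ↔ f i < f j := by
  constructor
  · intro h
    by_contra hc
    push_neg at hc
    have hsub : (s.filter fun k => f k ≤ f j) ⊆ s.filter fun k => f k ≤ f i := by
      intro k hk
      rw [Finset.mem_filter] at hk ⊢
      exact ⟨hk.1, hk.2.trans hc⟩
    exact absurd (Finset.card_le_card hsub) (not_le.2 h)
  · exact rank_lt s f hj

lemma one_le_rank {α : Type*} [DecidableEq α] (s : Finset α) (f : α → ℝ) {i : α} (hi : i ∈ s) :
    1 ≤ (s.filter fun k => f k ≤ f i).card :=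
  Finset.card_pos.2 ⟨i, Finset.mem_filter.2 ⟨hi, le_rfl⟩⟩

lemma rank_surj {n : ℕ} (f : Fin n → ℝ) (hf : Function.Injective f) {r : ℕ}
    (h1 : 1 ≤ r) (h2 : r ≤ n) :
    ∃ j, (Finset.univ.filter fun k => f k ≤ f j).card = r := by
  classical
  let g : Fin n → ℕ := fun j => (Finset.univ.filter fun k => f k ≤ f j).card
  have hginj : Function.Injective g := by
    intro a b hab
    simp only [g] at hab
    by_contra hne
    rcases (hf.ne hne).lt_or_gt with h | h
    · exact absurd hab (ne_of_lt (rank_lt Finset.univ f (Finset.mem_univ b) h))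
    · exact absurd hab (ne_of_gt (rank_lt Finset.univ f (Finset.mem_univ a) h))
  have himage : Finset.univ.image g = Finset.Icc 1 n := by
    apply Finset.eq_of_subset_of_card_le
    · intro r hr
      obtain ⟨j, _, rfl⟩ := Finset.mem_image.1 hr
      refine Finset.mem_Icc.2 ⟨one_le_rank _ _ (Finset.mem_univ j), ?_⟩
      exact le_trans (Finset.card_filter_le _ _) (by simp)
    · rw [Finset.card_image_of_injective _ hginj]
      simp [Nat.card_Icc]
  have hrmem : r ∈ Finset.univ.image g := by
    rw [himage]; exact Finset.mem_Icc.2 ⟨h1, h2⟩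
  obtain ⟨j, _, hj⟩ := Finset.mem_image.1 hrmem
  exact ⟨j, hj⟩

lemma card_filter_split {α : Type*} [DecidableEq α] [Fintype α] (i₀ : α) (Q : α → Prop)
    [DecidablePred Q] :
    (Finset.univ.filter Q).card
      = ((Finset.univ.erase i₀).filter Q).card + (if Q i₀ then 1 else 0) := by
  classical
  have h : (Finset.univ.erase i₀).filter Q = (Finset.univ.filter Q).erase i₀ :=
    Finset.filter_erase _ _ _
  rw [h]
  by_cases hq : Q i₀
  · rw [if_pos hq, Finset.card_erase_of_mem (Finset.mem_filter.2 ⟨Finset.mem_univ _, hq⟩)]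
    have : 1 ≤ (Finset.univ.filter Q).card :=
      Finset.card_pos.2 ⟨i₀, Finset.mem_filter.2 ⟨Finset.mem_univ _, hq⟩⟩
    omega
  · rw [if_neg hq, Finset.erase_eq_of_notMem (by simp [hq]), Nat.add_zero]

/-- deleting one entry changes the descent count by at most one. -/
lemma desSeq_del (a : ℕ → ℤ) (n p : ℕ) (h1 : 1 ≤ p) (h2 : p ≤ n) :
    desSeq (n - 1) (del p a) ≤ desSeq n a ∧ desSeq n a ≤ desSeq (n - 1) (del p a) + 1 := by
  classical
  obtain ⟨q, rfl⟩ : ∃ q, p = q + 1 := ⟨p - 1, by omega⟩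
  set f : ℕ → ℕ := fun i => if a (i + 1) < a i then 1 else 0 with hf
  set g : ℕ → ℕ := fun i => if del (q + 1) a (i + 1) < del (q + 1) a i then 1 else 0 with hg
  have hdes : desSeq n a = ∑ i ∈ Finset.range n, f i := by
    rw [desSeq, Finset.card_filter]
  have hdes' : desSeq (n - 1) (del (q + 1) a) = ∑ i ∈ Finset.range (n - 1), g i := by
    rw [desSeq, Finset.card_filter]
  have hgf : ∀ i, i + 1 < q + 1 → g i = f i := by
    intro i hi
    simp only [hg, hf, del, if_pos hi, if_pos (by omega : i < q + 1)]
  have hgf2 : ∀ i, q + 1 ≤ i → g i = f (i + 1) := by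
    intro i hi
    simp only [hg, hf, del, if_neg (by omega : ¬ i + 1 < q + 1),
      if_neg (by omega : ¬ i < q + 1)]
  rcases eq_or_lt_of_le h2 with rfl | hpn
  · -- p = n, n = q + 1, n - 1 = q
    have e1 : ∑ i ∈ Finset.range q, g i = ∑ i ∈ Finset.range q, f i :=
      Finset.sum_congr rfl fun i hi => hgf i (by simpa using Finset.mem_range.1 hi)
    have e2 : ∑ i ∈ Finset.range (q + 1), f i = ∑ i ∈ Finset.range q, f i + f q :=
      Finset.sum_range_succ f q
    have e3 : f q ≤ 1 := by simp only [hf]; split <;> omega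
    have e4 : (q + 1) - 1 = q := by omega
    rw [hdes, hdes', e4, e1, e2]
    omega
  · -- q + 1 < n
    have hq2n : q + 2 ≤ n := by omega
    have split1 : ∑ i ∈ Finset.range n, f i
        = ((∑ i ∈ Finset.range q, f i + f q) + f (q + 1)) + ∑ i ∈ Finset.Ico (q + 2) n, f i := by
      have c1 : ∑ i ∈ Finset.Ico 0 (q + 2), f i + ∑ i ∈ Finset.Ico (q + 2) n, f i
          = ∑ i ∈ Finset.Ico 0 n, f i := Finset.sum_Ico_consecutive f (by omega) hq2n
      have c2 : ∑ i ∈ Finset.Ico 0 (q + 2), f i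
          = (∑ i ∈ Finset.range q, f i + f q) + f (q + 1) := by
        rw [← Finset.range_eq_Ico, show q + 2 = (q + 1) + 1 from rfl,
          Finset.sum_range_succ, Finset.sum_range_succ]
      rw [Finset.range_eq_Ico, ← c1, c2, Finset.range_eq_Ico]
    have split2 : ∑ i ∈ Finset.range (n - 1), g i
        = (∑ i ∈ Finset.range q, g i + g q) + ∑ i ∈ Finset.Ico (q + 1) (n - 1), g i := by
      have c1 : ∑ i ∈ Finset.Ico 0 (q + 1), g i + ∑ i ∈ Finset.Ico (q + 1) (n - 1), g i
          = ∑ i ∈ Finset.Ico 0 (n - 1), g i :=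
        Finset.sum_Ico_consecutive g (by omega) (by omega)
      have c2 : ∑ i ∈ Finset.Ico 0 (q + 1), g i = ∑ i ∈ Finset.range q, g i + g q := by
        rw [← Finset.range_eq_Ico, Finset.sum_range_succ]
      rw [Finset.range_eq_Ico, ← c1, c2, Finset.range_eq_Ico]
    have e1 : ∑ i ∈ Finset.range q, g i = ∑ i ∈ Finset.range q, f i :=
      Finset.sum_congr rfl fun i hi => hgf i (by have := Finset.mem_range.1 hi; omega)
    have shift : ∑ i ∈ Finset.Ico (q + 1) (n - 1), g i = ∑ i ∈ Finset.Ico (q + 2) n, f i := by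
      have s1 : ∑ i ∈ Finset.Ico (q + 1) (n - 1), g i
          = ∑ i ∈ Finset.Ico (q + 1) (n - 1), f (i + 1) :=
        Finset.sum_congr rfl fun i hi => hgf2 i (Finset.mem_Ico.1 hi).1
      rw [s1, Finset.sum_Ico_eq_sum_range, Finset.sum_Ico_eq_sum_range]
      rw [show n - 1 - (q + 1) = n - (q + 2) by omega]
      exact Finset.sum_congr rfl fun i _ => by congr 1; omega
    have hb : g q ≤ f q + f (q + 1) ∧ f q + f (q + 1) ≤ g q + 1 := by
      simp only [hg, hf, del, if_pos (Nat.lt_succ_self q),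
        if_neg (lt_irrefl (q + 1))]
      split_ifs <;> omega
    rw [hdes, hdes', split1, split2, e1, shift]
    omega

lemma bsgn_cases {n : ℕ} (x : Fin n → ℝ × ℝ × Bool) (i : Fin n) :
    bsgn x i = 1 ∨ bsgn x i = -1 := by
  rw [bsgn]; split <;> simp

lemma desB_eq_desSeq (n : ℕ) (P : Equiv.Perm (SIdx n)) :
    desB n P = desSeq n (fun m : ℕ => valAt n P (m : ℤ)) := by
  rw [desB, desSeq]
  congr 1

lemma rk_eq {n : ℕ} (x : Fin n → ℝ × ℝ × Bool)
    (hd1 : ∀ i j, i ≠ j → (x i).1 ≠ (x j).1)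
    (i₀ j : Fin n) (hj : j ≠ i₀) (k : ℕ)
    (hx : xrank x j = if k < xrank x i₀ then k else k + 1) :
    ((Finset.univ.erase i₀).filter fun m => (x m).1 ≤ (x j).1).card = k := by
  classical
  have hsplit : xrank x j
      = ((Finset.univ.erase i₀).filter fun m => (x m).1 ≤ (x j).1).card
        + (if (x i₀).1 ≤ (x j).1 then 1 else 0) := by
    rw [xrank]; exact card_filter_split i₀ _
  have hne : (x i₀).1 ≠ (x j).1 := hd1 i₀ j (Ne.symm hj)
  rcases hne.lt_or_gt with h | h
  · have hlt : xrank x i₀ < xrank x j := rank_lt _ _ (Finset.mem_univ j) h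
    have hcond : ¬ k < xrank x i₀ := by
      intro hk; rw [if_pos hk] at hx; omega
    rw [if_neg hcond] at hx
    rw [if_pos h.le] at hsplit
    omega
  · have hlt : xrank x j < xrank x i₀ := rank_lt _ _ (Finset.mem_univ i₀) h
    have hcond : k < xrank x i₀ := by
      by_contra hk; rw [if_neg hk] at hx; omega
    rw [if_pos hcond] at hx
    rw [if_neg (not_le.2 h)] at hsplit
    omega

lemma desB_close {n : ℕ} (x x' : Fin n → ℝ × ℝ × Bool)
    (hd : DistinctCoords x) (hd' : DistinctCoords x')
    (i₀ : Fin n) (hdiff : ∀ j, j ≠ i₀ → x j = x' j)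
    (P P' : Equiv.Perm (SIdx n)) (hP : AssocSigned x P) (hP' : AssocSigned x' P') :
    desB n P ≤ desB n P' + 1 ∧ desB n P' ≤ desB n P + 1 := by
  classical
  set A : ℕ → ℤ := fun m => valAt n P (m : ℤ) with hA
  set A' : ℕ → ℤ := fun m => valAt n P' (m : ℤ) with hA'
  have hu : Function.Injective fun i => (x i).1 := by
    intro a b hab; by_contra hne; exact hd.1 a b hne hab
  have hu' : Function.Injective fun i => (x' i).1 := by
    intro a b hab; by_contra hne; exact hd'.1 a b hne hab
  set p := xrank x i₀ with hp
  set p' := xrank x' i₀ with hp'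
  have hp1 : 1 ≤ p := one_le_rank _ _ (Finset.mem_univ i₀)
  have hpn : p ≤ n := le_trans (Finset.card_filter_le _ _) (by simp)
  have hp1' : 1 ≤ p' := one_le_rank _ _ (Finset.mem_univ i₀)
  have hpn' : p' ≤ n := le_trans (Finset.card_filter_le _ _) (by simp)
  have pt : ∀ k, 1 ≤ k → k ≤ n - 1 → ∃ j, j ≠ i₀ ∧
      del p A k = bsgn x j * (yrank x j : ℤ) ∧ del p' A' k = bsgn x' j * (yrank x' j : ℤ) := by
    intro k hk1 hk2
    obtain ⟨j, hjr⟩ := rank_surj (fun i => (x i).1) hu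
      (r := if k < p then k else k + 1) (by split <;> omega) (by split <;> omega)
    have hxj : xrank x j = if k < p then k else k + 1 := hjr
    have hji : j ≠ i₀ := by
      intro hcon
      rw [hcon, ← hp] at hxj
      split at hxj <;> omega
    obtain ⟨j', hj'r⟩ := rank_surj (fun i => (x' i).1) hu'
      (r := if k < p' then k else k + 1) (by split <;> omega) (by split <;> omega)
    have hxj' : xrank x' j' = if k < p' then k else k + 1 := hj'r
    have hj'i : j' ≠ i₀ := by
      intro hcon
      rw [hcon, ← hp'] at hxj'
      split at hxj' <;> omega
    have hrk : ((Finset.univ.erase i₀).filter fun m => (x m).1 ≤ (x j).1).card = k :=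
      rk_eq x hd.1 i₀ j hji k hxj
    have hrk' : ((Finset.univ.erase i₀).filter fun m => (x' m).1 ≤ (x' j').1).card = k :=
      rk_eq x' hd'.1 i₀ j' hj'i k hxj'
    have hrkeq : ((Finset.univ.erase i₀).filter fun m => (x' m).1 ≤ (x' j).1).card = k := by
      rw [← hrk]
      apply congrArg
      apply Finset.filter_congr
      intro m hm
      have hmi : m ≠ i₀ := (Finset.mem_erase.1 hm).1
      rw [hdiff m hmi, hdiff j hji]
    have hjj : j = j' := by
      by_contra hne
      rcases (hd'.1 j j' hne).lt_or_gt with h | h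
      · have hlt2 : ((Finset.univ.erase i₀).filter fun m => (x' m).1 ≤ (x' j).1).card
            < ((Finset.univ.erase i₀).filter fun m => (x' m).1 ≤ (x' j').1).card :=
          rank_lt (Finset.univ.erase i₀) (fun i => (x' i).1)
            (Finset.mem_erase.2 ⟨hj'i, Finset.mem_univ j'⟩) h
        omega
      · have hlt2 : ((Finset.univ.erase i₀).filter fun m => (x' m).1 ≤ (x' j').1).card
            < ((Finset.univ.erase i₀).filter fun m => (x' m).1 ≤ (x' j).1).card :=
          rank_lt (Finset.univ.erase i₀) (fun i => (x' i).1)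
            (Finset.mem_erase.2 ⟨hji, Finset.mem_univ j⟩) h
        omega
    subst hjj
    refine ⟨j, hji, ?_, ?_⟩
    · have h2 := hP.2 j
      rw [hxj] at h2
      by_cases hkp : k < p
      · rw [if_pos hkp] at h2
        rw [del, if_pos hkp]
        exact h2
      · rw [if_neg hkp] at h2
        rw [del, if_neg hkp]
        exact_mod_cast h2
    · have h2 := hP'.2 j
      rw [hxj'] at h2
      by_cases hkp : k < p'
      · rw [if_pos hkp] at h2
        rw [del, if_pos hkp]
        exact h2
      · rw [if_neg hkp] at h2
        rw [del, if_neg hkp]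
        exact_mod_cast h2
  have hkey : desSeq (n - 1) (del p A) = desSeq (n - 1) (del p' A') := by
    rw [desSeq, desSeq]
    congr 1
    apply Finset.filter_congr
    intro k hk
    have hk2 : k < n - 1 := Finset.mem_range.1 hk
    rcases Nat.eq_zero_or_pos k with rfl | hk1
    · have h0 : del p A 0 = 0 := by
        rw [del, if_pos (by omega : 0 < p)]
        simp [hA, valAt]
      have h0' : del p' A' 0 = 0 := by
        rw [del, if_pos (by omega : 0 < p')]
        simp [hA', valAt]
      obtain ⟨j, hji, e1, e2⟩ := pt 1 le_rfl (by omega)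
      rw [h0, h0', e1, e2]
      have hbx : bsgn x j = bsgn x' j := by rw [bsgn, bsgn, hdiff j hji]
      have hy1 : 1 ≤ yrank x j := one_le_rank _ _ (Finset.mem_univ j)
      have hy1' : 1 ≤ yrank x' j := one_le_rank _ _ (Finset.mem_univ j)
      rw [← hbx]
      rcases bsgn_cases x j with h | h <;> rw [h] <;>
        simp only [one_mul, neg_one_mul] <;> constructor <;> intro hlt <;> omega
    · obtain ⟨j₁, hj₁, e1, e2⟩ := pt k hk1 (by omega)
      obtain ⟨j₂, hj₂, f1, f2⟩ := pt (k + 1) (by omega) (by omega)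
      rw [e1, e2, f1, f2]
      have hbx1 : bsgn x j₁ = bsgn x' j₁ := by rw [bsgn, bsgn, hdiff j₁ hj₁]
      have hbx2 : bsgn x j₂ = bsgn x' j₂ := by rw [bsgn, bsgn, hdiff j₂ hj₂]
      have hy1 : 1 ≤ yrank x j₁ := one_le_rank _ _ (Finset.mem_univ j₁)
      have hy2 : 1 ≤ yrank x j₂ := one_le_rank _ _ (Finset.mem_univ j₂)
      have hy1' : 1 ≤ yrank x' j₁ := one_le_rank _ _ (Finset.mem_univ j₁)
      have hy2' : 1 ≤ yrank x' j₂ := one_le_rank _ _ (Finset.mem_univ j₂)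
      have hcmp12 : yrank x j₂ < yrank x j₁ ↔ yrank x' j₂ < yrank x' j₁ := by
        rw [yrank, yrank, yrank, yrank,
          rank_lt_iff Finset.univ (fun i => (x i).2.1) (Finset.mem_univ j₁),
          rank_lt_iff Finset.univ (fun i => (x' i).2.1) (Finset.mem_univ j₁),
          hdiff j₁ hj₁, hdiff j₂ hj₂]
      have hcmp21 : yrank x j₁ < yrank x j₂ ↔ yrank x' j₁ < yrank x' j₂ := by
        rw [yrank, yrank, yrank, yrank,
          rank_lt_iff Finset.univ (fun i => (x i).2.1) (Finset.mem_univ j₂),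
          rank_lt_iff Finset.univ (fun i => (x' i).2.1) (Finset.mem_univ j₂),
          hdiff j₁ hj₁, hdiff j₂ hj₂]
      rw [← hbx1, ← hbx2]
      rcases bsgn_cases x j₁ with h | h <;> rcases bsgn_cases x j₂ with h' | h' <;>
        rw [h, h'] <;> simp only [one_mul, neg_one_mul] <;>
        constructor <;> intro hlt <;> omega
  have hdel := desSeq_del A n p hp1 hpn
  have hdel' := desSeq_del A' n p' hp1' hpn'
  have e : desB n P = desSeq n A := desB_eq_desSeq n P
  have e' : desB n P' = desSeq n A' := desB_eq_desSeq n P'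
  omega

lemma isSignedPerm_inv {n : ℕ} {P : Equiv.Perm (SIdx n)} (h : IsSignedPerm n P) :
    IsSignedPerm n P⁻¹ := by
  intro i
  apply P.injective
  rw [show ∀ y, P (P⁻¹ y) = y from P.apply_symm_apply, h (P⁻¹ i),
    show ∀ y, P (P⁻¹ y) = y from P.apply_symm_apply]

lemma assoc_inv {n : ℕ} {x : Fin n → ℝ × ℝ × Bool} {P : Equiv.Perm (SIdx n)}
    (hP : AssocSigned x P) :
    AssocSigned (fun i => ((x i).2.1, (x i).1, (x i).2.2)) P⁻¹ := by
  refine ⟨isSignedPerm_inv hP.1, ?_⟩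
  intro i
  show valAt n P⁻¹ (yrank x i : ℤ) = bsgn x i * (xrank x i : ℤ)
  have hr1 : 1 ≤ xrank x i := one_le_rank _ _ (Finset.mem_univ i)
  have hrn : xrank x i ≤ n := le_trans (Finset.card_filter_le _ _) (by simp)
  have hs1 : 1 ≤ yrank x i := one_le_rank _ _ (Finset.mem_univ i)
  have hsn : yrank x i ≤ n := le_trans (Finset.card_filter_le _ _) (by simp)
  set r := xrank x i with hrdef
  set s := yrank x i with hsdef
  have hrmem : (r : ℤ) ≠ 0 ∧ |(r : ℤ)| ≤ (n : ℤ) := by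
    constructor
    · exact_mod_cast (by omega : r ≠ 0)
    · rw [Int.abs_natCast]; exact_mod_cast hrn
  have hsmem : (s : ℤ) ≠ 0 ∧ |(s : ℤ)| ≤ (n : ℤ) := by
    constructor
    · exact_mod_cast (by omega : s ≠ 0)
    · rw [Int.abs_natCast]; exact_mod_cast hsn
  have h2 := hP.2 i
  rw [valAt, dif_pos hrmem] at h2
  rw [valAt, dif_pos hsmem]
  rcases bsgn_cases x i with hb | hb
  · rw [hb, one_mul] at h2 ⊢
    have h3 : P ⟨(r : ℤ), hrmem⟩ = ⟨(s : ℤ), hsmem⟩ := Subtype.ext h2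
    rw [← h3, show ∀ y, P⁻¹ (P y) = y from P.symm_apply_apply]
  · rw [hb, neg_one_mul] at h2 ⊢
    have h3 : P ⟨(r : ℤ), hrmem⟩ = -(⟨(s : ℤ), hsmem⟩ : SIdx n) :=
      Subtype.ext (by rw [h2]; rfl)
    have h4 : P⁻¹ (-(⟨(s : ℤ), hsmem⟩ : SIdx n)) = ⟨(r : ℤ), hrmem⟩ := by
      rw [← h3, show ∀ y, P⁻¹ (P y) = y from P.symm_apply_apply]
    rw [isSignedPerm_inv hP.1 ⟨(s : ℤ), hsmem⟩] at h4
    have h5 := congrArg Subtype.val h4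
    have h6 : (-(P⁻¹ (⟨(s : ℤ), hsmem⟩ : SIdx n))).1 = (r : ℤ) := h5
    rw [SIdx.neg_val] at h6
    omega

end Aux

/-- If two configurations in `([0,1]² × {±1})ⁿ` with pairwise distinct
first and second coordinates differ in at most one coordinate, then the values of
`f = des(π̃(·)) + des(π̃(·)⁻¹)` on their associated signed permutations differ by at most `4`. -/
theorem stmt13 (n : ℕ) (hn : 1 ≤ n) (x x' : Fin n → ℝ × ℝ × Bool)
    (hx : InRange x) (hx' : InRange x')
    (hd : DistinctCoords x) (hd' : DistinctCoords x')
    (hdiff : ∃ i₀ : Fin n, ∀ j : Fin n, j ≠ i₀ → x j = x' j)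
    (P P' : Equiv.Perm (SIdx n))
    (hP : AssocSigned x P) (hP' : AssocSigned x' P') :
    |fstat n P - fstat n P'| ≤ 4 := by
  obtain ⟨i₀, hdiff⟩ := hdiff
  have h1 := desB_close x x' hd hd' i₀ hdiff P P' hP hP'
  have h2 := desB_close (fun i => ((x i).2.1, (x i).1, (x i).2.2))
    (fun i => ((x' i).2.1, (x' i).1, (x' i).2.2)) ⟨hd.2, hd.1⟩ ⟨hd'.2, hd'.1⟩ i₀
    (fun j hj => congrArg (fun t : ℝ × ℝ × Bool => (t.2.1, t.1, t.2.2)) (hdiff j hj))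
    P⁻¹ P'⁻¹ (assoc_inv hP) (assoc_inv hP')
  rw [fstat, fstat, abs_le]
  omega
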